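/- Let P be a real n×n matrix, P_xy a real n×m matrix, and S a symmetric positive definite real m×m matrix. Then for every real n×m matrix K, trace(P + K·S·Kᵀ − P_xy·Kᵀ − K·P_xyᵀ) ≥ trace(P − P_xy·S⁻¹·P_xyᵀ), and equality holds if and only if K = P_xy·S⁻¹. -/

import Mathlib

open Matrix

/-- **Optimality of the Kalman gain (equations (6)–(8) of the paper).**
For a symmetric positive definite residual covariance `S`, the gain `K = P_xy S⁻¹`
minimizes `trace (P + K S Kᵀ − P_xy Kᵀ − K P_xyᵀ)` over all gains `K`, the minimum value
is `trace (P − P_xy S⁻¹ P_xyᵀ)`, and the minimizer is unique. -/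
theorem kalman_gain_optimality
    {n m : ℕ}
    (P : Matrix (Fin n) (Fin n) ℝ)
    (Pxy : Matrix (Fin n) (Fin m) ℝ)
    (S : Matrix (Fin m) (Fin m) ℝ) (hS : S.PosDef)
    (K : Matrix (Fin n) (Fin m) ℝ) :
    (P + K * S * Kᵀ - Pxy * Kᵀ - K * Pxyᵀ).trace
        ≥ (P - Pxy * S⁻¹ * Pxyᵀ).trace
    ∧ ((P + K * S * Kᵀ - Pxy * Kᵀ - K * Pxyᵀ).trace
        = (P - Pxy * S⁻¹ * Pxyᵀ).trace ↔ K = Pxy * S⁻¹) := by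
  set D := K - Pxy * S⁻¹ with hD
  have hdet : IsUnit S.det := hS.det_pos.ne'.isUnit
  have hSsymm : Sᵀ = S := by
    have := hS.isHermitian.eq
    rwa [conjTranspose_eq_transpose_of_trivial] at this
  have hSinv : S * S⁻¹ = 1 := mul_nonsing_inv S hdet
  have hSinv' : S⁻¹ * S = 1 := nonsing_inv_mul S hdet
  have h1 : S⁻¹ᵀ = S⁻¹ := by rw [transpose_nonsing_inv, hSsymm]
  have expand : D * S * Dᵀ
      = K * S * Kᵀ - K * Pxyᵀ - Pxy * Kᵀ + Pxy * S⁻¹ * Pxyᵀ := by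
    rw [hD, transpose_sub, transpose_mul, h1]
    have e2 : Pxy * S⁻¹ * S = Pxy := by
      rw [Matrix.mul_assoc, hSinv', Matrix.mul_one]
    simp only [Matrix.sub_mul, Matrix.mul_sub, e2]
    have e1 : K * S * (S⁻¹ * Pxyᵀ) = K * Pxyᵀ := by
      rw [Matrix.mul_assoc K S, ← Matrix.mul_assoc S, hSinv, Matrix.one_mul]
    have e4 : Pxy * (S⁻¹ * Pxyᵀ) = Pxy * S⁻¹ * Pxyᵀ := (Matrix.mul_assoc _ _ _).symm
    rw [e1, e4]
    abel
  have key : P + K * S * Kᵀ - Pxy * Kᵀ - K * Pxyᵀ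
      = (P - Pxy * S⁻¹ * Pxyᵀ) + D * S * Dᵀ := by
    rw [expand]; abel
  have diag : ∀ i, (D * S * Dᵀ) i i = D i ⬝ᵥ S *ᵥ D i := by
    intro i
    simp only [mul_apply, transpose_apply, dotProduct, mulVec,
      Finset.sum_mul, Finset.mul_sum, mul_assoc]
    exact Finset.sum_comm
  have nonneg : ∀ i, 0 ≤ D i ⬝ᵥ S *ᵥ D i := by
    intro i
    have := hS.posSemidef.dotProduct_mulVec_nonneg (D i)
    simpa using this
  have traceD : (D * S * Dᵀ).trace = ∑ i, D i ⬝ᵥ S *ᵥ D i := by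
    simp [Matrix.trace, Matrix.diag, diag]
  have htr : (P + K * S * Kᵀ - Pxy * Kᵀ - K * Pxyᵀ).trace
      = (P - Pxy * S⁻¹ * Pxyᵀ).trace + (D * S * Dᵀ).trace := by
    rw [key, trace_add]
  have htrD_nonneg : 0 ≤ (D * S * Dᵀ).trace := by
    rw [traceD]; exact Finset.sum_nonneg fun i _ => nonneg i
  constructor
  · rw [htr]; linarith
  · rw [htr]
    constructor
    · intro h
      have hz : (D * S * Dᵀ).trace = 0 := by linarith
      rw [traceD] at hz
      have hall : ∀ i ∈ Finset.univ, D i ⬝ᵥ S *ᵥ D i = 0 :=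
        (Finset.sum_eq_zero_iff_of_nonneg fun i _ => nonneg i).1 hz
      have hDzero : D = 0 := by
        ext i j
        by_contra hne
        have hDi : D i ≠ 0 := by
          intro h0
          exact hne (by rw [h0]; rfl)
        have := fun h : D i ≠ 0 => hS.dotProduct_mulVec_pos h
        have hpos : 0 < D i ⬝ᵥ S *ᵥ D i := by
          have := hS.dotProduct_mulVec_pos hDi
          simpa using this
        exact hpos.ne' (hall i (Finset.mem_univ i))
      have : K - Pxy * S⁻¹ = 0 := hDzero
      exact sub_eq_zero.1 this
    · intro h
      have : D = 0 := by rw [hD, h, sub_self]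
      rw [this]
      simp
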